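/- For i, j ≥ 1, V_{i,j}(t) = C(2t)²·(1 + D(2t) + ⋯ + D(2t)^{i−1})·(1 + D(2t) + ⋯ + D(2t)^{j−1}), where C is the Catalan generating function and D = C − 1. -/

import Mathlib

open PowerSeries Finset

/-- Generating function of the Catalan numbers `C_n = (1/(n+1))·binom(2n,n)`. -/
noncomputable def catGF : PowerSeries ℚ :=
  PowerSeries.mk fun n => (Nat.choose (2 * n) n : ℚ) / (n + 1)

/-- `D(t) = C(t) - 1`. -/
noncomputable def DGF : PowerSeries ℚ := catGF - 1

/-- A lattice walk of length `n` with steps `±1`. -/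
def IsWalk (n : ℕ) (L : Fin (n + 1) → ℤ) : Prop :=
  ∀ k : Fin n, |L k.succ - L k.castSucc| = 1

/-- Two walks intersect (share a common point at the same time). -/
def Meets {m : ℕ} (L L' : Fin m → ℤ) : Prop := ∃ k, L k = L' k

/-- All triples of walks of length `n` starting at heights `0, 2i, 2i+2j`. -/
def USet (i j n : ℕ) :
    Set ((Fin (n + 1) → ℤ) × (Fin (n + 1) → ℤ) × (Fin (n + 1) → ℤ)) :=
  {T | IsWalk n T.1 ∧ IsWalk n T.2.1 ∧ IsWalk n T.2.2 ∧
    T.1 0 = 0 ∧ T.2.1 0 = 2 * i ∧ T.2.2 0 = 2 * i + 2 * j}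

/-- Triples where `L₁` and `L₂` are nonintersecting. -/
def W12Set (i j n : ℕ) := {T ∈ USet i j n | ¬ Meets T.1 T.2.1}

/-- Triples where `L₂` and `L₃` are nonintersecting. -/
def W23Set (i j n : ℕ) := {T ∈ USet i j n | ¬ Meets T.2.1 T.2.2}

/-- Triples where `L₁` intersects `L₃`. -/
def M13Set (i j n : ℕ) := {T ∈ USet i j n | Meets T.1 T.2.2}

/-- Triples where `L₂` intersects both `L₁` and `L₃`. -/
def M1223Set (i j n : ℕ) :=
  {T ∈ USet i j n | Meets T.2.1 T.1 ∧ Meets T.2.1 T.2.2}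

/-- Vicious (pairwise nonintersecting) triples. -/
def VSet (i j n : ℕ) :=
  {T ∈ USet i j n | ¬ Meets T.1 T.2.1 ∧ ¬ Meets T.2.1 T.2.2 ∧ ¬ Meets T.1 T.2.2}

/-- Pairs of walks of length `n` starting at heights `0` and `2i`. -/
def PairSet (i n : ℕ) : Set ((Fin (n + 1) → ℤ) × (Fin (n + 1) → ℤ)) :=
  {P | IsWalk n P.1 ∧ IsWalk n P.2 ∧ P.1 0 = 0 ∧ P.2 0 = 2 * i}

/-- Intersecting pairs. -/
def MSet (i n : ℕ) := {P ∈ PairSet i n | Meets P.1 P.2}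

/-- Nonintersecting (vicious) pairs. -/
def NSet (i n : ℕ) := {P ∈ PairSet i n | ¬ Meets P.1 P.2}

/-- Converging pairs: never meet before time `n`, meet at time `n`. -/
def TSet (i n : ℕ) :=
  {P ∈ PairSet i n | (∀ k : Fin (n + 1), (k : ℕ) < n → P.1 k ≠ P.2 k) ∧
    P.1 (Fin.last n) = P.2 (Fin.last n)}

/-- 2-watermelons of length `n`. -/
def MelonSet (n : ℕ) : Set ((Fin (n + 1) → ℤ) × (Fin (n + 1) → ℤ)) :=
  {P | IsWalk n P.1 ∧ IsWalk n P.2 ∧ P.1 0 = 0 ∧ P.2 0 = 2 ∧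
    P.2 (Fin.last n) = P.1 (Fin.last n) + 2 ∧ ∀ k, P.1 k < P.2 k}

/-- Partial Dyck paths of length `2n` from height `2i` to `0`, strictly positive before the end. -/
def PDyckSet (i n : ℕ) : Set (Fin (2 * n + 1) → ℤ) :=
  {Q | IsWalk (2 * n) Q ∧ Q 0 = 2 * i ∧ Q (Fin.last (2 * n)) = 0 ∧
    ∀ k : Fin (2 * n + 1), (k : ℕ) < 2 * n → 0 < Q k}


lemma coeff_catGF (n : ℕ) : coeff n catGF = (catalan n : ℚ) := by
  rw [catGF, coeff_mk, catalan_eq_centralBinom_div, Nat.cast_div (Nat.succ_dvd_centralBinom n) (by exact_mod_cast Nat.succ_ne_zero n), Nat.centralBinom]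
  push_cast
  ring

lemma catGF_eq : catGF = 1 + X * catGF ^ 2 := by
  ext n
  cases n with
  | zero => simp [coeff_catGF]
  | succ n =>
    rw [coeff_catGF, map_add, coeff_succ_X_mul, pow_two, coeff_mul]
    rw [catalan_succ']
    push_cast
    rw [coeff_one, if_neg (Nat.succ_ne_zero n)]
    rw [zero_add]
    apply Finset.sum_congr rfl
    intro ij hij
    rw [coeff_catGF, coeff_catGF]

noncomputable def Dq : PowerSeries ℚ := PowerSeries.rescale (2:ℚ) DGF
noncomputable def Cq : PowerSeries ℚ := PowerSeries.rescale (2:ℚ) catGF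

lemma Cq_eq_one_add_Dq : Cq = 1 + Dq := by
  rw [Cq, Dq, DGF, map_sub, map_one]; ring

lemma Dq_eq : Dq = 2 * X * (1 + Dq) ^ 2 := by
  rw [← Cq_eq_one_add_Dq, Cq, Dq, DGF, map_sub, map_one]
  nth_rewrite 1 [catGF_eq]
  rw [map_add, map_mul, map_one, rescale_X, map_pow]
  have : (PowerSeries.C) 2 = (2 : PowerSeries ℚ) := by exact map_ofNat _ 2
  rw [this]; ring

noncomputable def SS (i : ℕ) : PowerSeries ℚ := ∑ k ∈ Finset.range i, Dq ^ k

noncomputable def Gser (i j : ℕ) : PowerSeries ℚ := Cq ^ 2 * SS i * SS j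

lemma SS_succ (i : ℕ) : SS (i+1) = SS i + Dq ^ i := Finset.sum_range_succ _ _

lemma SS_mul (i : ℕ) : SS (i+1) * (1 - Dq) = 1 - Dq * Dq ^ i := by
  have := geom_sum_mul Dq (i+1)
  rw [SS]
  have h2 : Dq ^ (i+1) = Dq * Dq ^ i := by ring
  linear_combination -this - h2

lemma key_alg (P Q x y D X' : PowerSeries ℚ)
    (h1 : P * (1 - D) = 1 - D * x) (h2 : Q * (1 - D) = 1 - D * y)
    (h3 : D = 2 * X' * (1 + D) ^ 2) :
    (1+D)^2 * P * Q =
      1 + X' * (2 * ((1+D)^2 * P * Q) + (1+D)^2 * (P + D*x) * Q + (1+D)^2 * (P - x) * Q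
        + (1+D)^2 * P * (Q + D*y) + (1+D)^2 * P * (Q - y)
        + (1+D)^2 * (P + D*x) * (Q - y) + (1+D)^2 * (P - x) * (Q + D*y)) := by
  linear_combination ((1-D)*Q + D*y) * h1 + h2 +
    (4*P*Q + (D-1)*(x*Q+P*y) - D*x*y) * h3

lemma Gser_rec (a b : ℕ) : Gser (a+1) (b+1) =
    1 + X * (2 * Gser (a+1) (b+1) + Gser (a+2) (b+1) + Gser a (b+1) + Gser (a+1) (b+2) + Gser (a+1) b
      + Gser (a+2) b + Gser a (b+2)) := by
  have hP := SS_mul a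
  have hQ := SS_mul b
  have hD := Dq_eq
  have key := key_alg (SS (a+1)) (SS (b+1)) (Dq ^ a) (Dq ^ b) Dq X hP hQ hD
  have e1 : SS (a+2) = SS (a+1) + Dq * Dq ^ a := by rw [SS_succ, pow_succ']
  have e2 : SS a = SS (a+1) - Dq ^ a := by rw [SS_succ]; ring
  have e3 : SS (b+2) = SS (b+1) + Dq * Dq ^ b := by rw [SS_succ, pow_succ']
  have e4 : SS b = SS (b+1) - Dq ^ b := by rw [SS_succ]; ring
  simp only [Gser, Cq_eq_one_add_Dq, e1, e2, e3, e4]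
  linear_combination key

lemma Gser_zero_left (j : ℕ) : Gser 0 j = 0 := by simp [Gser, SS]

lemma Gser_zero_right (i : ℕ) : Gser i 0 = 0 := by simp [Gser, SS]

lemma coeff_zero_Gser (i j : ℕ) : coeff 0 (Gser (i+1) (j+1)) = 1 := by
  have hD : PowerSeries.constantCoeff Dq = 0 := by
    rw [Dq, DGF]
    simp [← coeff_zero_eq_constantCoeff, coeff_rescale, coeff_catGF]
  have hS : ∀ m : ℕ, PowerSeries.constantCoeff (SS (m+1)) = 1 := by
    intro m
    rw [SS]
    rw [map_sum]
    rw [Finset.sum_eq_single 0]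
    · simp
    · intro k hk hk0
      rw [map_pow, hD, zero_pow hk0]
    · simp
  rw [coeff_zero_eq_constantCoeff, Gser, map_mul, map_mul, map_pow, hS, hS,
    Cq_eq_one_add_Dq, map_add, map_one, hD]
  norm_num


lemma isWalk_tail {n : ℕ} {L : Fin (n + 2) → ℤ} (h : IsWalk (n+1) L) (c : ℤ) :
    IsWalk n (fun k => L k.succ - c) := by
  intro k
  have := h k.succ
  rw [← Fin.succ_castSucc] at this
  simpa using this

-- cons of a walk
lemma isWalk_cons {n : ℕ} (c d : ℤ) (L : Fin (n + 1) → ℤ) (hL : IsWalk n L)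
    (h0 : |L 0 + d - c| = 1) :
    IsWalk (n+1) (fun k => Fin.cases c (fun m => L m + d) k) := by
  intro k
  induction k using Fin.cases with
  | zero =>
    exact h0
  | succ m =>
    have h1 : ((m.succ : Fin (n+1)).succ : Fin (n+2)) = Fin.succ (m.succ) := rfl
    have := hL m
    simp only [Fin.cases_succ, ← Fin.succ_castSucc, Fin.cases_succ]
    simpa using this

def walkSet (c : ℤ) (n : ℕ) : Set (Fin (n + 1) → ℤ) := {L | IsWalk n L ∧ L 0 = c}

lemma walkSet_finite : ∀ (n : ℕ) (c : ℤ), (walkSet c n).Finite := by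
  intro n
  induction n with
  | zero =>
    intro c
    apply Set.Finite.subset (Set.finite_singleton (fun _ => c))
    intro L hL
    have : L = fun _ => c := by
      funext k
      have : k = 0 := Fin.fin_one_eq_zero k
      rw [this, hL.2]
    simp [this]
  | succ n ih =>
    intro c
    have himg : ((fun (L : Fin (n+2) → ℤ) => fun k : Fin (n+1) => L k.succ) '' walkSet c (n+1)).Finite := by
      apply Set.Finite.subset ((ih (c-1)).union (ih (c+1)))
      rintro _ ⟨L, hL, rfl⟩
      have hw := isWalk_tail hL.1 0
      simp only [sub_zero] at hw
      have hstep : |L (Fin.succ 0) - L 0| = 1 := by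
        have := hL.1 0
        simpa using this
      have h1 : L (Fin.succ 0) = c - 1 ∨ L (Fin.succ 0) = c + 1 := by
        rw [hL.2] at hstep
        rcases abs_eq (by norm_num : (0:ℤ) ≤ 1) |>.mp hstep with h | h
        · right; linarith
        · left; linarith
      rcases h1 with h | h
      · left; exact ⟨hw, h⟩
      · right; exact ⟨hw, h⟩
    apply himg.of_finite_image
    intro L hL L' hL' he
    funext k
    induction k using Fin.cases with
    | zero => rw [hL.2, hL'.2]
    | succ m => exact congrFun he m

lemma uSet_finite (i j n : ℕ) : (USet i j n).Finite := by
  apply Set.Finite.subset (((walkSet_finite n 0).prod ((walkSet_finite n (2*i)).prod (walkSet_finite n (2*i+2*j)))))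
  rintro ⟨L1, L2, L3⟩ h
  obtain ⟨w1, w2, w3, s1, s2, s3⟩ := h
  exact ⟨⟨w1, s1⟩, ⟨w2, s2⟩, ⟨w3, s3⟩⟩

lemma vSet_subset (i j n : ℕ) : VSet i j n ⊆ USet i j n := fun T hT => hT.1

lemma vSet_finite (i j n : ℕ) : (VSet i j n).Finite :=
  (uSet_finite i j n).subset (vSet_subset i j n)

lemma vSet_zero_left (j n : ℕ) : VSet 0 j n = ∅ := by
  ext T
  simp only [VSet, Set.mem_setOf_eq, Set.mem_empty_iff_false, iff_false]
  rintro ⟨⟨_, _, _, s1, s2, _⟩, m12, _⟩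
  exact m12 ⟨0, by rw [s1, s2]; norm_num⟩

lemma vSet_zero_right (i n : ℕ) : VSet i 0 n = ∅ := by
  ext T
  simp only [VSet, Set.mem_setOf_eq, Set.mem_empty_iff_false, iff_false]
  rintro ⟨⟨_, _, _, _, s2, s3⟩, _, m23, _⟩
  exact m23 ⟨0, by rw [s2, s3]; norm_num⟩

lemma vSet_base (i j : ℕ) (hi : 1 ≤ i) (hj : 1 ≤ j) :
    VSet i j 0 = {((fun _ : Fin 1 => (0:ℤ)), (fun _ : Fin 1 => (2*i:ℤ)), (fun _ : Fin 1 => (2*i+2*j:ℤ)))} := by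
  ext ⟨L1, L2, L3⟩
  constructor
  · rintro ⟨⟨_, _, _, s1, s2, s3⟩, _⟩
    simp only at s1 s2 s3
    have h1 : L1 = fun _ => (0:ℤ) := by
      funext k; rw [Fin.fin_one_eq_zero k]; exact s1
    have h2 : L2 = fun _ => (2*i:ℤ) := by
      funext k; rw [Fin.fin_one_eq_zero k]; exact s2
    have h3 : L3 = fun _ => (2*i+2*j:ℤ) := by
      funext k; rw [Fin.fin_one_eq_zero k]; exact s3
    simp [h1, h2, h3, Prod.ext_iff]
  · intro h
    simp only [Set.mem_singleton_iff, Prod.ext_iff] at h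
    obtain ⟨h1, h2, h3⟩ := h
    subst h1; subst h2; subst h3
    refine ⟨⟨fun k => k.elim0, fun k => k.elim0, fun k => k.elim0, rfl, rfl, rfl⟩, ?_, ?_, ?_⟩
    · rintro ⟨k, hk⟩
      simp only at hk
      have : (0:ℤ) < 2*i := by positivity
      omega
    · rintro ⟨k, hk⟩
      simp only at hk
      have : (0:ℤ) < 2*j := by positivity
      omega
    · rintro ⟨k, hk⟩
      simp only at hk
      have : (0:ℤ) < 2*i + 2*j := by positivity
      omega

def piece (i j n : ℕ) (d : ℤ × ℤ × ℤ) :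
    Set ((Fin (n + 2) → ℤ) × (Fin (n + 2) → ℤ) × (Fin (n + 2) → ℤ)) :=
  {T ∈ VSet i j (n+1) | T.1 1 - T.1 0 = d.1 ∧ T.2.1 1 - T.2.1 0 = d.2.1 ∧
    T.2.2 1 - T.2.2 0 = d.2.2}

lemma one_eq_succ_zero {n : ℕ} : (1 : Fin (n+2)) = (0 : Fin (n+1)).succ := by
  simp [Fin.succ_zero_eq_one]

lemma piece_ncard (n i j i' j' : ℕ) (hi : 1 ≤ i) (hj : 1 ≤ j) (d1 d2 d3 : ℤ)
    (hd1 : d1 = 1 ∨ d1 = -1) (hd2 : d2 = 1 ∨ d2 = -1) (hd3 : d3 = 1 ∨ d3 = -1)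
    (hi' : (2*(i':ℤ)) = 2*i + d2 - d1) (hj' : (2*(j':ℤ)) = 2*j + d3 - d2) :
    (piece i j n (d1, d2, d3)).ncard = (VSet i' j' n).ncard := by
  set Φ : ((Fin (n + 2) → ℤ) × (Fin (n + 2) → ℤ) × (Fin (n + 2) → ℤ)) →
      ((Fin (n + 1) → ℤ) × (Fin (n + 1) → ℤ) × (Fin (n + 1) → ℤ)) :=
    fun T => ((fun k => T.1 k.succ - d1), (fun k => T.2.1 k.succ - d1),
      (fun k => T.2.2 k.succ - d1)) with hΦ
  have hinj : Set.InjOn Φ (piece i j n (d1, d2, d3)) := by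
    rintro ⟨L1, L2, L3⟩ h ⟨M1, M2, M3⟩ h' he
    obtain ⟨⟨⟨_, _, _, s1, s2, s3⟩, _⟩, _⟩ := h
    obtain ⟨⟨⟨_, _, _, t1, t2, t3⟩, _⟩, _⟩ := h'
    simp only [Prod.ext_iff, hΦ] at he ⊢
    obtain ⟨e1, e2, e3⟩ := he
    simp only at s1 s2 s3 t1 t2 t3
    refine ⟨?_, ?_, ?_⟩
    · funext k
      induction k using Fin.cases with
      | zero => rw [s1, t1]
      | succ m => have := congrFun e1 m; exact sub_left_injective this
    · funext k
      induction k using Fin.cases with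
      | zero => rw [s2, t2]
      | succ m => have := congrFun e2 m; exact sub_left_injective this
    · funext k
      induction k using Fin.cases with
      | zero => rw [s3, t3]
      | succ m => have := congrFun e3 m; exact sub_left_injective this
  have himg : Φ '' (piece i j n (d1, d2, d3)) = VSet i' j' n := by
    apply Set.Subset.antisymm
    · rintro _ ⟨⟨L1, L2, L3⟩, h, rfl⟩
      obtain ⟨⟨⟨w1, w2, w3, s1, s2, s3⟩, m12, m23, m13⟩, e1, e2, e3⟩ := h
      simp only at w1 w2 w3 s1 s2 s3 m12 m23 m13 e1 e2 e3
      refine ⟨⟨isWalk_tail w1 d1, isWalk_tail w2 d1, isWalk_tail w3 d1, ?_, ?_, ?_⟩, ?_, ?_, ?_⟩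
      · show L1 (0:Fin (n+1)).succ - d1 = 0
        rw [← one_eq_succ_zero]; omega
      · show L2 (0:Fin (n+1)).succ - d1 = 2*(i':ℤ)
        rw [← one_eq_succ_zero]; omega
      · show L3 (0:Fin (n+1)).succ - d1 = 2*(i':ℤ) + 2*(j':ℤ)
        rw [← one_eq_succ_zero]; omega
      · rintro ⟨k, hk⟩
        try simp only at hk
        exact m12 ⟨k.succ, by linarith⟩
      · rintro ⟨k, hk⟩
        try simp only at hk
        exact m23 ⟨k.succ, by linarith⟩
      · rintro ⟨k, hk⟩
        try simp only at hk
        exact m13 ⟨k.succ, by linarith⟩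
    · rintro ⟨M1, M2, M3⟩ ⟨⟨w1, w2, w3, s1, s2, s3⟩, m12, m23, m13⟩
      simp only at w1 w2 w3 s1 s2 s3 m12 m23 m13
      refine ⟨((fun k => Fin.cases 0 (fun m => M1 m + d1) k),
        (fun k => Fin.cases (2*(i:ℤ)) (fun m => M2 m + d1) k),
        (fun k => Fin.cases (2*(i:ℤ)+2*(j:ℤ)) (fun m => M3 m + d1) k)), ?_, ?_⟩
      · refine ⟨⟨⟨isWalk_cons _ _ _ w1 (by rw [s1]; simp; rcases hd1 with h|h <;> simp [h]),
          isWalk_cons _ _ _ w2 (by rw [s2]; rw [show (2*(i':ℤ)) + d1 - 2*(i:ℤ) = d2 by omega]; rcases hd2 with h|h <;> simp [h]),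
          isWalk_cons _ _ _ w3 (by rw [s3]; rw [show (2*(i':ℤ)+2*(j':ℤ)) + d1 - (2*(i:ℤ)+2*(j:ℤ)) = d3 by omega]; rcases hd3 with h|h <;> simp [h]),
          rfl, rfl, rfl⟩, ?_, ?_, ?_⟩, ?_, ?_, ?_⟩
        · rintro ⟨k, hk⟩
          induction k using Fin.cases with
          | zero =>
            simp only [Fin.cases_zero] at hk
            omega
          | succ m =>
            simp only [Fin.cases_succ] at hk
            exact m12 ⟨m, by linarith⟩
        · rintro ⟨k, hk⟩
          induction k using Fin.cases with
          | zero =>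
            simp only [Fin.cases_zero] at hk
            omega
          | succ m =>
            simp only [Fin.cases_succ] at hk
            exact m23 ⟨m, by linarith⟩
        · rintro ⟨k, hk⟩
          induction k using Fin.cases with
          | zero =>
            simp only [Fin.cases_zero] at hk
            omega
          | succ m =>
            simp only [Fin.cases_succ] at hk
            exact m13 ⟨m, by linarith⟩
        · show (Fin.cases 0 (fun m => M1 m + d1) (1 : Fin (n+2)) : ℤ) - _ = d1
          rw [one_eq_succ_zero]
          simp only [Fin.cases_succ, Fin.cases_zero, s1]
          ring
        · show (Fin.cases (2*(i:ℤ)) (fun m => M2 m + d1) (1 : Fin (n+2)) : ℤ) - _ = d2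
          rw [one_eq_succ_zero]
          simp only [Fin.cases_succ, Fin.cases_zero, s2]
          omega
        · show (Fin.cases (2*(i:ℤ)+2*(j:ℤ)) (fun m => M3 m + d1) (1 : Fin (n+2)) : ℤ) - _ = d3
          rw [one_eq_succ_zero]
          simp only [Fin.cases_succ, Fin.cases_zero, s3]
          omega
      · simp only [hΦ, Prod.ext_iff]
        refine ⟨?_, ?_, ?_⟩ <;> funext k <;> simp [Fin.cases_succ]
  rw [← himg, Set.ncard_image_of_injOn hinj]

lemma piece_subset (i j n : ℕ) (d : ℤ × ℤ × ℤ) : piece i j n d ⊆ VSet i j (n+1) :=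
  fun _ h => h.1

lemma piece_disjoint (i j n : ℕ) (d d' : ℤ × ℤ × ℤ) (hne : d ≠ d') :
    Disjoint (piece i j n d) (piece i j n d') := by
  rw [Set.disjoint_left]
  rintro T ⟨_, e1, e2, e3⟩ ⟨_, f1, f2, f3⟩
  exact hne (by
    obtain ⟨d1, d2, d3⟩ := d
    obtain ⟨d1', d2', d3'⟩ := d'
    simp only at e1 e2 e3 f1 f2 f3
    simp only [Prod.ext_iff]
    refine ⟨by omega, by omega, by omega⟩)

lemma vSet_eq_union (i j n : ℕ) :
    VSet i j (n+1) = piece i j n (1,1,1) ∪ (piece i j n (-1,-1,-1) ∪ (piece i j n (1,1,-1) ∪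
      (piece i j n (1,-1,1) ∪ (piece i j n (1,-1,-1) ∪ (piece i j n (-1,1,1) ∪
      (piece i j n (-1,1,-1) ∪ piece i j n (-1,-1,1))))))) := by
  apply Set.Subset.antisymm
  · intro T hT
    have w1 := hT.1.1 0
    have w2 := hT.1.2.1 0
    have w3 := hT.1.2.2.1 0
    simp only [Fin.castSucc_zero, ← one_eq_succ_zero] at w1 w2 w3
    have h1 := (abs_eq (by norm_num : (0:ℤ) ≤ 1)).mp w1
    have h2 := (abs_eq (by norm_num : (0:ℤ) ≤ 1)).mp w2
    have h3 := (abs_eq (by norm_num : (0:ℤ) ≤ 1)).mp w3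
    simp only [Set.mem_union, piece, Set.mem_setOf_eq]
    rcases h1 with e1|e1 <;> rcases h2 with e2|e2 <;> rcases h3 with e3|e3
    · exact Or.inl ⟨hT, e1, e2, e3⟩
    · exact Or.inr (Or.inr (Or.inl ⟨hT, e1, e2, e3⟩))
    · exact Or.inr (Or.inr (Or.inr (Or.inl ⟨hT, e1, e2, e3⟩)))
    · exact Or.inr (Or.inr (Or.inr (Or.inr (Or.inl ⟨hT, e1, e2, e3⟩))))
    · exact Or.inr (Or.inr (Or.inr (Or.inr (Or.inr (Or.inl ⟨hT, e1, e2, e3⟩)))))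
    · exact Or.inr (Or.inr (Or.inr (Or.inr (Or.inr (Or.inr (Or.inl ⟨hT, e1, e2, e3⟩))))))
    · exact Or.inr (Or.inr (Or.inr (Or.inr (Or.inr (Or.inr (Or.inr ⟨hT, e1, e2, e3⟩))))))
    · exact Or.inr (Or.inl ⟨hT, e1, e2, e3⟩)
  · exact Set.union_subset (piece_subset _ _ _ _) (Set.union_subset (piece_subset _ _ _ _)
      (Set.union_subset (piece_subset _ _ _ _) (Set.union_subset (piece_subset _ _ _ _)
      (Set.union_subset (piece_subset _ _ _ _) (Set.union_subset (piece_subset _ _ _ _)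
      (Set.union_subset (piece_subset _ _ _ _) (piece_subset _ _ _ _)))))))

lemma vSet_rec (n a b : ℕ) :
    (VSet (a+1) (b+1) (n+1)).ncard =
      2 * (VSet (a+1) (b+1) n).ncard + (VSet (a+2) (b+1) n).ncard + (VSet a (b+1) n).ncard
      + (VSet (a+1) (b+2) n).ncard + (VSet (a+1) b n).ncard + (VSet (a+2) b n).ncard
      + (VSet a (b+2) n).ncard := by
  have hfin : ∀ d, (piece (a+1) (b+1) n d).Finite :=
    fun d => (vSet_finite _ _ _).subset (piece_subset _ _ _ d)
  have hd := piece_disjoint (a+1) (b+1) n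
  rw [vSet_eq_union]
  rw [Set.ncard_union_eq (by
    simp only [Set.disjoint_union_right]
    exact ⟨hd _ _ (by decide), hd _ _ (by decide), hd _ _ (by decide), hd _ _ (by decide),
      hd _ _ (by decide), hd _ _ (by decide), hd _ _ (by decide)⟩) (hfin _)
    ((hfin _).union ((hfin _).union ((hfin _).union ((hfin _).union ((hfin _).union
      ((hfin _).union (hfin _)))))))]
  rw [Set.ncard_union_eq (by
    simp only [Set.disjoint_union_right]
    exact ⟨hd _ _ (by decide), hd _ _ (by decide), hd _ _ (by decide), hd _ _ (by decide),
      hd _ _ (by decide), hd _ _ (by decide)⟩) (hfin _)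
    ((hfin _).union ((hfin _).union ((hfin _).union ((hfin _).union ((hfin _).union (hfin _))))))]
  rw [Set.ncard_union_eq (by
    simp only [Set.disjoint_union_right]
    exact ⟨hd _ _ (by decide), hd _ _ (by decide), hd _ _ (by decide), hd _ _ (by decide),
      hd _ _ (by decide)⟩) (hfin _)
    ((hfin _).union ((hfin _).union ((hfin _).union ((hfin _).union (hfin _)))))]
  rw [Set.ncard_union_eq (by
    simp only [Set.disjoint_union_right]
    exact ⟨hd _ _ (by decide), hd _ _ (by decide), hd _ _ (by decide), hd _ _ (by decide)⟩)
    (hfin _) ((hfin _).union ((hfin _).union ((hfin _).union (hfin _))))]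
  rw [Set.ncard_union_eq (by
    simp only [Set.disjoint_union_right]
    exact ⟨hd _ _ (by decide), hd _ _ (by decide), hd _ _ (by decide)⟩) (hfin _)
    ((hfin _).union ((hfin _).union (hfin _)))]
  rw [Set.ncard_union_eq (by
    simp only [Set.disjoint_union_right]
    exact ⟨hd _ _ (by decide), hd _ _ (by decide)⟩) (hfin _) ((hfin _).union (hfin _))]
  rw [Set.ncard_union_eq (hd _ _ (by decide)) (hfin _) (hfin _)]
  rw [piece_ncard n (a+1) (b+1) (a+1) (b+1) (by omega) (by omega) 1 1 1 (by tauto) (by tauto)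
    (by tauto) (by push_cast; ring) (by push_cast; ring)]
  rw [piece_ncard n (a+1) (b+1) (a+1) (b+1) (by omega) (by omega) (-1) (-1) (-1) (by tauto)
    (by tauto) (by tauto) (by push_cast; ring) (by push_cast; ring)]
  rw [piece_ncard n (a+1) (b+1) (a+1) b (by omega) (by omega) 1 1 (-1) (by tauto) (by tauto)
    (by tauto) (by push_cast; ring) (by push_cast; ring)]
  rw [piece_ncard n (a+1) (b+1) a (b+2) (by omega) (by omega) 1 (-1) 1 (by tauto) (by tauto)
    (by tauto) (by push_cast; ring) (by push_cast; ring)]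
  rw [piece_ncard n (a+1) (b+1) a (b+1) (by omega) (by omega) 1 (-1) (-1) (by tauto) (by tauto)
    (by tauto) (by push_cast; ring) (by push_cast; ring)]
  rw [piece_ncard n (a+1) (b+1) (a+2) (b+1) (by omega) (by omega) (-1) 1 1 (by tauto) (by tauto)
    (by tauto) (by push_cast; ring) (by push_cast; ring)]
  rw [piece_ncard n (a+1) (b+1) (a+2) b (by omega) (by omega) (-1) 1 (-1) (by tauto) (by tauto)
    (by tauto) (by push_cast; ring) (by push_cast; ring)]
  rw [piece_ncard n (a+1) (b+1) (a+1) (b+2) (by omega) (by omega) (-1) (-1) 1 (by tauto)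
    (by tauto) (by tauto) (by push_cast; ring) (by push_cast; ring)]
  ring


lemma main_glue : ∀ (n i j : ℕ), ((VSet i j n).ncard : ℚ) = PowerSeries.coeff n (Gser i j) := by
  intro n
  induction n with
  | zero =>
    intro i j
    match i, j with
    | 0, j => rw [vSet_zero_left, Gser_zero_left]; simp
    | i+1, 0 => rw [vSet_zero_right, Gser_zero_right]; simp
    | i+1, j+1 =>
      rw [vSet_base _ _ (by omega) (by omega), coeff_zero_Gser, Set.ncard_singleton]
      norm_num
  | succ n ih =>
    intro i j
    match i, j with
    | 0, j => rw [vSet_zero_left, Gser_zero_left]; simp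
    | i+1, 0 => rw [vSet_zero_right, Gser_zero_right]; simp
    | a+1, b+1 =>
      rw [vSet_rec, Gser_rec, map_add, coeff_succ_X_mul, coeff_one,
        if_neg (Nat.succ_ne_zero n), zero_add, map_add, map_add, map_add, map_add, map_add,
        map_add]
      rw [two_mul (Gser (a+1) (b+1)), map_add]
      push_cast
      rw [ih, ih, ih, ih, ih, ih, ih]
      ring

theorem stmt16 (i j : ℕ) (hi : 1 ≤ i) (hj : 1 ≤ j) :
    PowerSeries.mk (fun n => (Nat.card (VSet i j n) : ℚ)) =
      (PowerSeries.rescale (2 : ℚ) catGF) ^ 2 *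
        (∑ k ∈ Finset.range i, (PowerSeries.rescale (2 : ℚ) DGF) ^ k) *
        (∑ k ∈ Finset.range j, (PowerSeries.rescale (2 : ℚ) DGF) ^ k) := by
  have hG : (PowerSeries.rescale (2 : ℚ) catGF) ^ 2 *
      (∑ k ∈ Finset.range i, (PowerSeries.rescale (2 : ℚ) DGF) ^ k) *
      (∑ k ∈ Finset.range j, (PowerSeries.rescale (2 : ℚ) DGF) ^ k) = Gser i j := by
    simp only [Gser, Cq, SS, Dq]
  rw [hG]
  ext n
  rw [PowerSeries.coeff_mk, Nat.card_coe_set_eq]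
  exact main_glue n i j
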